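/- Under Assumptions (A2), if additionally √n · h_n → 0 as n → ∞, then for every x ∈ T the rescaled bias of the non-normalized estimator vanishes: √n | E[f̃_n(x)] − f(x) | ≤ 3 √n · sup_{x∈T} P(Z_{x,h_n} ≠ x) → 0 as n → ∞. -/

import Mathlib

open MeasureTheory ProbabilityTheory Filter Topology

theorem rescaled_bias_vanishes
    {Ω : Type*} [MeasurableSpace Ω] (P : Measure Ω) [IsProbabilityMeasure P]
    (T : Set ℝ) (hTc : T.Countable)
    (f : ℝ → ℝ) (hf0 : ∀ x, 0 ≤ f x) (hfT : ∀ x ∉ T, f x = 0) (hf1 : HasSum f 1)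
    (S : ℝ → Set ℝ) (hSc : ∀ x ∈ T, (S x).Countable)
    (K : ℝ → ℝ → ℝ → ℝ)
    (hK0 : ∀ x ∈ T, ∀ h > (0:ℝ), ∀ z, 0 ≤ K x h z)
    (hKS : ∀ x ∈ T, ∀ h > (0:ℝ), ∀ z ∉ S x, K x h z = 0)
    (hK1 : ∀ x ∈ T, ∀ h > (0:ℝ), HasSum (K x h) 1)
    (hKm : ∀ x h, Measurable (K x h))
    (hxS : ∀ x ∈ T, x ∈ S x)
    (α : ℝ) (hα : 0 < α)
    (hsep : ∀ x ∈ T, ∀ z ∈ (T ∪ S x) \ {x}, α ≤ |z - x|)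
    (H : ℕ → ℝ) (hH : ∀ n, 0 < H n) (hH0 : Tendsto H atTop (𝓝 0))
    (X1 : Ω → ℝ) (hX1m : Measurable X1)
    (hX1d : ∀ x : ℝ, P (X1 ⁻¹' {x}) = ENNReal.ofReal (f x))
    (EZ VZ : ℝ → ℝ → ℝ)
    (hEZ : ∀ x ∈ T, ∀ h > (0:ℝ), HasSum (fun z : ℝ => K x h z * z) (EZ x h))
    (hVZ : ∀ x ∈ T, ∀ h > (0:ℝ), HasSum (fun z : ℝ => K x h z * (z - EZ x h) ^ 2) (VZ x h))
    (hA2E : ∃ c > (0:ℝ), ∃ N : ℕ, ∀ n ≥ N, ∀ x ∈ T, |EZ x (H n) - x| ≤ c * H n)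
    (hA2V : ∃ c > (0:ℝ), ∃ N : ℕ, ∀ n ≥ N, ∀ x ∈ T, VZ x (H n) ≤ c * H n)
    (hroot : Tendsto (fun n : ℕ => Real.sqrt n * H n) atTop (𝓝 0)) :
    ∀ x ∈ T,
      (∀ n : ℕ, Real.sqrt n * |(∫ ω, K x (H n) (X1 ω) ∂P) - f x| ≤
        3 * Real.sqrt n * ⨆ y : T, (1 - K (y:ℝ) (H n) (y:ℝ))) ∧
      Tendsto (fun n : ℕ => 3 * Real.sqrt n * ⨆ y : T, (1 - K (y:ℝ) (H n) (y:ℝ))) atTop (𝓝 0) ∧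
      Tendsto (fun n : ℕ => Real.sqrt n * |(∫ ω, K x (H n) (X1 ω) ∂P) - f x|) atTop (𝓝 0) := by
  classical
  intro x hx
  obtain ⟨c₁, hc₁, N₁, hN₁⟩ := hA2E
  obtain ⟨c₂, hc₂, N₂, hN₂⟩ := hA2V
  haveI : Nonempty T := ⟨⟨x, hx⟩⟩
  -- K values are at most 1
  have hKz_le1 : ∀ y ∈ T, ∀ h > (0:ℝ), ∀ z, K y h z ≤ 1 := fun y hy h hh z =>
    le_hasSum (hK1 y hy h hh) z fun j _ => hK0 y hy h hh j
  have hterm_nonneg : ∀ y ∈ T, ∀ h > (0:ℝ), 0 ≤ 1 - K y h y := fun y hy h hh => by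
    have := hKz_le1 y hy h hh y; linarith
  have hf_le1 : ∀ t, f t ≤ 1 := fun t => le_hasSum hf1 t fun j _ => hf0 j
  -- sup facts
  have hbdd : ∀ n : ℕ, BddAbove (Set.range fun y : T => 1 - K (y:ℝ) (H n) (y:ℝ)) := by
    intro n
    refine ⟨1, ?_⟩
    rintro b ⟨y, rfl⟩
    have := hK0 y y.2 (H n) (hH n) (y : ℝ)
    simp only []
    linarith
  have hsup_nonneg : ∀ n : ℕ, 0 ≤ ⨆ y : T, (1 - K (y:ℝ) (H n) (y:ℝ)) := by
    intro n
    have h1 := le_ciSup (hbdd n) (⟨x, hx⟩ : T)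
    have h2 := hterm_nonneg x hx (H n) (hH n)
    exact le_trans h2 h1
  -- support of f is inside T
  have hsupp : Function.support f ⊆ T := by
    intro t ht
    by_contra hts
    exact ht (hfT t hts)
  have hfT_sum : HasSum (fun t : T => f (t : ℝ)) 1 :=
    (hasSum_subtype_iff_of_support_subset hsupp).mpr hf1
  -- the integral identity
  set μ : Measure ℝ := P.map X1 with hμdef
  haveI hμprob : IsProbabilityMeasure μ := Measure.isProbabilityMeasure_map hX1m.aemeasurable
  have hμsing : ∀ t : ℝ, μ {t} = ENNReal.ofReal (f t) := by
    intro t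
    rw [hμdef, Measure.map_apply hX1m (measurableSet_singleton t)]
    exact hX1d t
  have hTmeas : MeasurableSet T := hTc.measurableSet
  have hμT : μ T = 1 := by
    have h1 : μ T = ∑' t : T, μ {(t : ℝ)} := by
      conv_lhs => rw [← Set.biUnion_of_singleton T]
      exact measure_biUnion hTc (fun a _ b _ hab => by simp [Set.disjoint_singleton, hab])
        (fun b _ => measurableSet_singleton b)
    rw [h1]
    have h2 : ∑' t : T, μ {(t : ℝ)} = ∑' t : T, ENNReal.ofReal (f (t : ℝ)) := by
      congr 1; funext t; exact hμsing t
    rw [h2, ← ENNReal.ofReal_tsum_of_nonneg (fun t => hf0 _) hfT_sum.summable,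
      hfT_sum.tsum_eq]
    simp
  have hμTc : μ Tᶜ = 0 := by
    have h1 := measure_compl hTmeas (measure_ne_top μ T)
    rw [hμT, measure_univ] at h1
    simpa using h1
  have hint : ∀ n : ℕ, ∫ ω, K x (H n) (X1 ω) ∂P = ∑' t : T, f (t : ℝ) * K x (H n) (t : ℝ) := by
    intro n
    set h := H n with hhdef
    have hh : 0 < h := hH n
    have hintg : Integrable (K x h) μ := by
      refine (integrable_const (1 : ℝ)).mono' (hKm x h).aestronglyMeasurable
        (ae_of_all _ fun z => ?_)
      rw [Real.norm_eq_abs, abs_of_nonneg (hK0 x hx h hh z)]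
      exact hKz_le1 x hx h hh z
    have h1 : ∫ ω, K x h (X1 ω) ∂P = ∫ z, K x h z ∂μ :=
      (integral_map hX1m.aemeasurable (hKm x h).aestronglyMeasurable).symm
    have h2 : ∫ z, K x h z ∂μ = ∫ z in T, K x h z ∂μ := by
      rw [← integral_add_compl hTmeas hintg, Measure.restrict_eq_zero.mpr hμTc,
        integral_zero_measure, add_zero]
    have h3 : ∫ z in T, K x h z ∂μ = ∑' t : T, (μ {(t : ℝ)}).toReal • K x h (t : ℝ) :=
      setIntegral_countable _ hTc hintg.integrableOn
    rw [h1, h2, h3]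
    congr 1; funext t
    rw [hμsing, ENNReal.toReal_ofReal (hf0 _), smul_eq_mul]
  -- bias bound
  have hbias : ∀ n : ℕ, |(∫ ω, K x (H n) (X1 ω) ∂P) - f x| ≤ 2 * (1 - K x (H n) x) := by
    intro n
    set h := H n with hhdef
    have hh : 0 < h := hH n
    have hsummand : Summable (fun t : T => f (t : ℝ) * K x h (t : ℝ)) := by
      refine hfT_sum.summable.of_nonneg_of_le
        (fun t => mul_nonneg (hf0 _) (hK0 x hx h hh _)) (fun t => ?_)
      exact mul_le_of_le_one_right (hf0 _) (hKz_le1 x hx h hh _)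
    have hupd : HasSum (Function.update (K x h) x 0) (1 - K x h x) := by
      have h1 := (hK1 x hx h hh).update x 0
      have h2 : (0 : ℝ) - K x h x + 1 = 1 - K x h x := by ring
      rwa [h2] at h1
    have hEx : ∃ R : ℝ, (∑' t : T, f (t : ℝ) * K x h (t : ℝ)) = f x * K x h x + R ∧
        0 ≤ R ∧ R ≤ 1 - K x h x := by
      refine ⟨_, Summable.tsum_eq_add_tsum_ite hsummand (⟨x, hx⟩ : T), ?_, ?_⟩
      · refine tsum_nonneg fun t => ?_
        split
        · exact le_refl 0
        · exact mul_nonneg (hf0 _) (hK0 x hx h hh _)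
      · rw [← hupd.tsum_eq]
        refine Summable.tsum_le_tsum_of_inj (fun t : T => (t : ℝ)) Subtype.coe_injective
          (fun c _ => ?_) (fun t => ?_) ?_ hupd.summable
        · by_cases hc : c = x
          · subst hc; simp
          · rw [Function.update_of_ne hc]; exact hK0 x hx h hh c
        · by_cases ht : t = (⟨x, hx⟩ : T)
          · subst ht; simp
          · have htx : (t : ℝ) ≠ x := fun hc => ht (Subtype.ext hc)
            rw [if_neg ht, Function.update_of_ne htx]
            exact mul_le_of_le_one_left (hK0 x hx h hh _) (hf_le1 _)
        · refine hsummand.of_nonneg_of_le (fun t => ?_) (fun t => ?_)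
          · split
            · exact le_refl 0
            · exact mul_nonneg (hf0 _) (hK0 x hx h hh _)
          · split
            · exact mul_nonneg (hf0 _) (hK0 x hx h hh _)
            · exact le_refl _
    obtain ⟨R, hReq, hR_nonneg, hR_le⟩ := hEx
    have hK_le := hKz_le1 x hx h hh x
    have hK_nn := hK0 x hx h hh x
    have hfx_nn := hf0 x
    have hfx_le := hf_le1 x
    have hintn := hint n
    rw [← hhdef] at hintn
    rw [hintn, hReq]
    have ha_nn : 0 ≤ f x * (1 - K x h x) := mul_nonneg hfx_nn (by linarith)
    have ha_le : f x * (1 - K x h x) ≤ 1 - K x h x :=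
      mul_le_of_le_one_left (by linarith) hfx_le
    have heq : f x * K x h x + R - f x = R - f x * (1 - K x h x) := by ring
    rw [heq, abs_le]
    constructor <;> linarith
  -- part 1
  have hpart1 : ∀ n : ℕ, Real.sqrt n * |(∫ ω, K x (H n) (X1 ω) ∂P) - f x| ≤
      3 * Real.sqrt n * ⨆ y : T, (1 - K (y:ℝ) (H n) (y:ℝ)) := by
    intro n
    have h1 : 1 - K x (H n) x ≤ ⨆ y : T, (1 - K (y:ℝ) (H n) (y:ℝ)) :=
      le_ciSup (hbdd n) (⟨x, hx⟩ : T)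
    have h2 : |(∫ ω, K x (H n) (X1 ω) ∂P) - f x| ≤
        3 * ⨆ y : T, (1 - K (y:ℝ) (H n) (y:ℝ)) := by
      have := hbias n
      have := hsup_nonneg n
      linarith
    calc Real.sqrt n * |(∫ ω, K x (H n) (X1 ω) ∂P) - f x|
        ≤ Real.sqrt n * (3 * ⨆ y : T, (1 - K (y:ℝ) (H n) (y:ℝ))) :=
          mul_le_mul_of_nonneg_left h2 (Real.sqrt_nonneg n)
      _ = 3 * Real.sqrt n * ⨆ y : T, (1 - K (y:ℝ) (H n) (y:ℝ)) := by ring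
  -- Chebyshev-type bound
  have hcheb : ∀ n ≥ max N₁ N₂, ∀ y ∈ T,
      1 - K y (H n) y ≤ (c₂ * H n + (c₁ * H n) ^ 2) / α ^ 2 := by
    intro n hn y hy
    set h := H n with hhdef
    have hh : 0 < h := hH n
    set E := EZ y h with hEdef
    set V := VZ y h with hVdef
    have hs1 := hK1 y hy h hh
    have hsE := hEZ y hy h hh
    have hsV := hVZ y hy h hh
    have hs0 : HasSum (fun z : ℝ => K y h z * (z - E)) 0 := by
      have h1 : (fun z : ℝ => K y h z * (z - E)) =
          (fun z : ℝ => K y h z * z - E * K y h z) := by funext z; ring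
      rw [h1]
      simpa [hEdef] using hsE.sub (hs1.mul_left E)
    have hsY : HasSum (fun z : ℝ => K y h z * (z - y) ^ 2) (V + (E - y) ^ 2) := by
      have h1 := (hsV.add (hs0.mul_left (2 * (E - y)))).add (hs1.mul_left ((E - y) ^ 2))
      have h2 : (fun z : ℝ => K y h z * (z - E) ^ 2 + 2 * (E - y) * (K y h z * (z - E)) +
          (E - y) ^ 2 * K y h z) = (fun z : ℝ => K y h z * (z - y) ^ 2) := by
        funext z; ring
      have h3 : V + 2 * (E - y) * 0 + (E - y) ^ 2 * 1 = V + (E - y) ^ 2 := by ring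
      rw [h2, h3] at h1
      exact h1
    have hupd : HasSum (Function.update (K y h) y 0) (1 - K y h y) := by
      have h1 := hs1.update y 0
      have h2 : (0 : ℝ) - K y h y + 1 = 1 - K y h y := by ring
      rwa [h2] at h1
    have hαsq : α ^ 2 * (1 - K y h y) ≤ V + (E - y) ^ 2 := by
      refine hasSum_le (fun z => ?_) (hupd.mul_left (α ^ 2)) hsY
      by_cases hz : z = y
      · subst hz; simp
      · rw [Function.update_of_ne hz]
        by_cases hzS : z ∈ S y
        · have hαz : α ≤ |z - y| := hsep y hy z ⟨Or.inr hzS, hz⟩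
          have h1 : α ^ 2 ≤ (z - y) ^ 2 := by
            calc α ^ 2 ≤ |z - y| ^ 2 := pow_le_pow_left₀ hα.le hαz 2
              _ = (z - y) ^ 2 := sq_abs _
          have h2 := hK0 y hy h hh z
          nlinarith
        · rw [hKS y hy h hh z hzS]; simp
    have hV_le : V ≤ c₂ * h := by
      have := hN₂ n (le_trans (le_max_right N₁ N₂) hn) y hy
      rwa [← hhdef] at this
    have hE_le : |E - y| ≤ c₁ * h := by
      have := hN₁ n (le_trans (le_max_left N₁ N₂) hn) y hy
      rwa [← hhdef] at this
    have hE2 : (E - y) ^ 2 ≤ (c₁ * h) ^ 2 := by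
      rw [← sq_abs (E - y)]
      exact pow_le_pow_left₀ (abs_nonneg _) hE_le 2
    rw [le_div_iff₀ (by positivity : (0:ℝ) < α ^ 2)]
    nlinarith
  -- sup bound
  have hsupb : ∀ n ≥ max N₁ N₂,
      (⨆ y : T, (1 - K (y:ℝ) (H n) (y:ℝ))) ≤ (c₂ * H n + (c₁ * H n) ^ 2) / α ^ 2 := by
    intro n hn
    exact ciSup_le fun y => hcheb n hn y y.2
  -- tendsto of the bounding sequence
  have hb0 : Tendsto (fun n : ℕ => 3 / α ^ 2 *
      (c₂ * (Real.sqrt n * H n) + c₁ ^ 2 * (Real.sqrt n * H n * H n))) atTop (𝓝 0) := by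
    have h7 : Tendsto (fun n : ℕ => Real.sqrt n * H n * H n) atTop (𝓝 0) := by
      simpa using hroot.mul hH0
    have h8 := ((hroot.const_mul c₂).add (h7.const_mul (c₁ ^ 2))).const_mul (3 / α ^ 2)
    simpa using h8
  have hpart2 : Tendsto (fun n : ℕ => 3 * Real.sqrt n *
      ⨆ y : T, (1 - K (y:ℝ) (H n) (y:ℝ))) atTop (𝓝 0) := by
    refine tendsto_of_tendsto_of_tendsto_of_le_of_le' tendsto_const_nhds hb0 ?_ ?_
    · filter_upwards with n
      have := hsup_nonneg n
      have := Real.sqrt_nonneg (n : ℝ)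
      positivity
    · filter_upwards [eventually_ge_atTop (max N₁ N₂)] with n hn
      have h1 : 3 * Real.sqrt n * (⨆ y : T, (1 - K (y:ℝ) (H n) (y:ℝ))) ≤
          3 * Real.sqrt n * ((c₂ * H n + (c₁ * H n) ^ 2) / α ^ 2) := by
        refine mul_le_mul_of_nonneg_left (hsupb n hn) ?_
        have := Real.sqrt_nonneg (n : ℝ)
        positivity
      have h2 : 3 * Real.sqrt n * ((c₂ * H n + (c₁ * H n) ^ 2) / α ^ 2) =
          3 / α ^ 2 * (c₂ * (Real.sqrt n * H n) + c₁ ^ 2 * (Real.sqrt n * H n * H n)) := by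
        field_simp
      linarith [h1, h2.le, h2.ge]
  refine ⟨hpart1, hpart2, ?_⟩
  refine tendsto_of_tendsto_of_tendsto_of_le_of_le' tendsto_const_nhds hpart2 ?_ ?_
  · filter_upwards with n
    positivity
  · filter_upwards with n
    exact hpart1 n
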